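/- Let Γ and Δ be finite simple graphs, and set A₀ = I, A₁ = A(Γ), A₂ = J − I − A(Γ) (matrices indexed by V(Γ)) and B₀ = I, B₁ = A(Δ), B₂ = J − I − A(Δ) (indexed by V(Δ)). Fix s_{ij} ∈ {0,1} for i, j ∈ {0,1,2} with s₀₀ = 0, and let Γ ⋆ Δ be the graph on V(Γ) × V(Δ) with adjacency matrix Σ_{i,j} s_{ij} (A_i ⊗ B_j). Suppose π = {C₁, …, C_t} is an equitable partition of Γ with characteristic matrix S and quotient matrix R. Then A(Γ ⋆ Δ)(S ⊗ I) = (S ⊗ I) · Σ_{j=0}^{2} ( s_{0j} (I ⊗ B_j) + s_{1j} (R ⊗ B_j) + s_{2j} ((M − I − R) ⊗ B_j) ), where M is the t × t matrix with M_{ij} = |C_j|. -/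

import Mathlib

open Classical Matrix Kronecker

/-- The number of neighbors of `x` inside the set `c`. -/
noncomputable def nbrCount {V : Type*} (G : SimpleGraph V) (x : V) (c : Finset V) : ℕ :=
  (c.filter fun y => G.Adj x y).card

/-- `{C i} ∪ {D}` is a partition of the vertex set (all cells nonempty, pairwise
disjoint, covering). -/
def IsPartitionWithCell {V ι : Type*} (C : ι → Finset V) (D : Finset V) : Prop :=
  (∀ i, (C i).Nonempty) ∧ D.Nonempty ∧
    Pairwise (fun i j => Disjoint (C i) (C j)) ∧
    (∀ i, Disjoint (C i) D) ∧ ∀ x : V, x ∈ D ∨ ∃ i, x ∈ C i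

/-- The family of cells `C` is equitable for `G` : any two vertices of a cell `C i`
have the same number of neighbors in each cell `C j`. -/
def IsEquitableOn {V ι : Type*} (G : SimpleGraph V) (C : ι → Finset V) : Prop :=
  ∀ i j, ∀ x ∈ C i, ∀ y ∈ C i, nbrCount G x (C j) = nbrCount G y (C j)

/-- Every vertex of `D` has `0`, `|C i|/2` or `|C i|` neighbors in each cell `C i`. -/
def GMhalf {V ι : Type*} (G : SimpleGraph V) (C : ι → Finset V) (D : Finset V) : Prop :=
  ∀ x ∈ D, ∀ i, nbrCount G x (C i) = 0 ∨ 2 * nbrCount G x (C i) = (C i).card ∨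
    nbrCount G x (C i) = (C i).card

/-- `π = {C₁, …, C_t, D}` is a Godsil–McKay partition of `G` with Godsil–McKay cell `D`. -/
def IsGMPartition {V ι : Type*} (G : SimpleGraph V) (C : ι → Finset V) (D : Finset V) : Prop :=
  IsPartitionWithCell C D ∧ IsEquitableOn G C ∧ GMhalf G C D

/-- The graph obtained from `G` by Godsil–McKay switching with respect to the
partition `{C₁, …, C_t, D}` : adjacency and nonadjacency between `x ∈ D` and the
vertices of `C i` are interchanged whenever `x` has exactly `|C i|/2` neighbors in `C i`. -/
def GMswitch {V ι : Type*} (G : SimpleGraph V) (C : ι → Finset V) (D : Finset V) :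
    SimpleGraph V where
  Adj x y := x ≠ y ∧ Xor' (G.Adj x y)
    (∃ i, (x ∈ D ∧ y ∈ C i ∧ 2 * nbrCount G x (C i) = (C i).card) ∨
          (y ∈ D ∧ x ∈ C i ∧ 2 * nbrCount G y (C i) = (C i).card))
  symm := by
    refine ⟨?_⟩
    rintro x y ⟨hne, h⟩
    refine ⟨hne.symm, ?_⟩
    have h1 : (G.Adj y x) = (G.Adj x y) := propext (G.adj_comm y x)
    have h2 : (∃ i, (y ∈ D ∧ x ∈ C i ∧ 2 * nbrCount G y (C i) = (C i).card) ∨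
          (x ∈ D ∧ y ∈ C i ∧ 2 * nbrCount G x (C i) = (C i).card)) =
        (∃ i, (x ∈ D ∧ y ∈ C i ∧ 2 * nbrCount G x (C i) = (C i).card) ∨
          (y ∈ D ∧ x ∈ C i ∧ 2 * nbrCount G y (C i) = (C i).card)) :=
      propext (exists_congr fun i => or_comm)
    rw [h1, h2]
    exact h
  loopless := by refine ⟨?_⟩; rintro x ⟨hne, -⟩; exact hne rfl

/-- The adjacency matrix of a graph, with rational entries. -/
noncomputable def adjM {V : Type*} (G : SimpleGraph V) : Matrix V V ℚ :=
  Matrix.of fun x y => if G.Adj x y then 1 else 0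

/-- The all-one matrix. -/
def allOnes (V : Type*) : Matrix V V ℚ := Matrix.of fun _ _ => 1

/-- The switching matrix `Q` of the partition `{C₁, …, C_t, D}` :
`Q x y = 2/|C i| - δ_{x y}` if `x, y ∈ C i`, `Q x y = δ_{x y}` if `x, y ∈ D`,
and `Q x y = 0` otherwise. -/
noncomputable def switchMatrix {V ι : Type*} (C : ι → Finset V) (D : Finset V) :
    Matrix V V ℚ :=
  Matrix.of fun x y =>
    if h : ∃ i, x ∈ C i ∧ y ∈ C i then
      2 / ((C h.choose).card : ℚ) - (if x = y then 1 else 0)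
    else if x ∈ D ∧ y ∈ D then (if x = y then 1 else 0) else 0

/-- The characteristic matrix of a family of cells: `S x i = 1` iff `x ∈ C i`. -/
noncomputable def charMat {V ι : Type*} (C : ι → Finset V) : Matrix V ι ℚ :=
  Matrix.of fun x i => if x ∈ C i then 1 else 0

/-- `A₀ = I`, `A₁ = A(G)`, `A₂ = J - I - A(G)`. -/
noncomputable def stdMats {V : Type*} [DecidableEq V] (G : SimpleGraph V) :
    Fin 3 → Matrix V V ℚ :=
  ![1, adjM G, allOnes V - 1 - adjM G]

/-- The three basic relations: `i = 0` : equality, `i = 1` : adjacency,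
`i = 2` : distinct nonadjacency. -/
def relOfIdx {V : Type*} (G : SimpleGraph V) (i : Fin 3) (x y : V) : Prop :=
  (i = 0 ∧ x = y) ∨ (i = 1 ∧ G.Adj x y) ∨ (i = 2 ∧ x ≠ y ∧ ¬ G.Adj x y)

lemma relOfIdx_symm {V : Type*} {G : SimpleGraph V} {i : Fin 3} {x y : V}
    (h : relOfIdx G i x y) : relOfIdx G i y x := by
  rcases h with ⟨hi, h⟩ | ⟨hi, h⟩ | ⟨hi, h1, h2⟩
  · exact Or.inl ⟨hi, h.symm⟩
  · exact Or.inr (Or.inl ⟨hi, h.symm⟩)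
  · exact Or.inr (Or.inr ⟨hi, h1.symm, fun hadj => h2 hadj.symm⟩)

/-- The unified graph product of type `[0 s₀₁ s₀₂; s₁₀ s₁₁ s₁₂; s₂₀ s₂₁ s₂₂]` :
the graph on `V × W` whose adjacency matrix is `Σ_{i,j} s i j • (A_i ⊗ B_j)`. -/
def unifiedProd {V W : Type*} (G : SimpleGraph V) (H : SimpleGraph W)
    (s : Fin 3 → Fin 3 → ℚ) : SimpleGraph (V × W) where
  Adj p q := p ≠ q ∧ ∃ i j, s i j = 1 ∧ relOfIdx G i p.1 q.1 ∧ relOfIdx H j p.2 q.2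
  symm := by
    refine ⟨?_⟩
    rintro p q ⟨hne, i, j, hs, hi, hj⟩
    exact ⟨hne.symm, i, j, hs, relOfIdx_symm hi, relOfIdx_symm hj⟩
  loopless := by refine ⟨?_⟩; rintro p ⟨hne, -⟩; exact hne rfl

lemma ones_charMat {V : Type*} [Fintype V] {t : ℕ} (C : Fin t → Finset V)
    (hdisj : Pairwise fun i j => Disjoint (C i) (C j))
    (hcover : ∀ x : V, ∃ i, x ∈ C i) :
    allOnes V * charMat C
      = charMat C * Matrix.of (fun _ k : Fin t => ((C k).card : ℚ)) := by
  ext x k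
  obtain ⟨i, hi⟩ := hcover x
  simp only [Matrix.mul_apply, allOnes, charMat, Matrix.of_apply, one_mul]
  rw [Finset.sum_boole, Finset.sum_eq_single i]
  · simp [hi, Finset.filter_mem_eq_inter]
  · intro l _ hl
    have : x ∉ C l := fun hxl => Finset.disjoint_left.mp (hdisj hl) hxl hi
    simp [this]
  · simp

/-- the computation `A(Γ ⋆ Δ)(S ⊗ I) = (S ⊗ I)(Σ_j (s₀ⱼ (I ⊗ Bⱼ)
+ s₁ⱼ (R ⊗ Bⱼ) + s₂ⱼ ((M - I - R) ⊗ Bⱼ)))`. -/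
theorem unifiedProd_charMat_eq {V W : Type*} [Fintype V] [DecidableEq V]
    [Fintype W] [DecidableEq W] (G : SimpleGraph V) (H : SimpleGraph W)
    (s : Fin 3 → Fin 3 → ℚ) (hs : ∀ i j, s i j = 0 ∨ s i j = 1) (hs00 : s 0 0 = 0)
    {t : ℕ} (C : Fin t → Finset V)
    (hne : ∀ i, (C i).Nonempty)
    (hdisj : Pairwise fun i j => Disjoint (C i) (C j))
    (hcover : ∀ x : V, ∃ i, x ∈ C i)
    (R : Matrix (Fin t) (Fin t) ℚ)
    (hR : adjM G * charMat C = charMat C * R) :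
    (∑ i : Fin 3, ∑ j : Fin 3, s i j • (stdMats G i ⊗ₖ stdMats H j))
        * (charMat C ⊗ₖ (1 : Matrix W W ℚ))
      = (charMat C ⊗ₖ (1 : Matrix W W ℚ)) *
          ∑ j : Fin 3,
            (s 0 j • ((1 : Matrix (Fin t) (Fin t) ℚ) ⊗ₖ stdMats H j)
              + s 1 j • (R ⊗ₖ stdMats H j)
              + s 2 j • ((Matrix.of (fun _ k : Fin t => ((C k).card : ℚ)) - 1 - R)
                  ⊗ₖ stdMats H j)) := by
  have hJ := ones_charMat C hdisj hcover
  set S := charMat C with hS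
  set M : Matrix (Fin t) (Fin t) ℚ := Matrix.of (fun _ k : Fin t => ((C k).card : ℚ)) with hM
  have h0 : stdMats G 0 * S = S * (1 : Matrix (Fin t) (Fin t) ℚ) := by
    simp [stdMats, Matrix.one_mul, Matrix.mul_one]
  have h1 : stdMats G 1 * S = S * R := by simpa [stdMats] using hR
  have h2 : stdMats G 2 * S = S * (M - 1 - R) := by
    show (allOnes V - 1 - adjM G) * S = _
    rw [Matrix.sub_mul, Matrix.sub_mul, hJ, hR, Matrix.one_mul, Matrix.mul_sub, Matrix.mul_sub,
      Matrix.mul_one]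
  simp only [Fin.sum_univ_three]
  simp only [Matrix.add_mul, Matrix.mul_add, Matrix.smul_mul, Matrix.mul_smul,
    ← Matrix.mul_kronecker_mul, Matrix.mul_one, Matrix.one_mul, h0, h1, h2]
  abel
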